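/- Let k > 1 and let the set of students be partitioned into a set N of sincere students and a set M of sophisticated students. For any problem (P,≻,q) where all schools have a common priority order, the game (SD^k, P) has a unique Nash equilibrium outcome, namely the matching SD(P^k_N, P_M, ≻, q) (the serial dictatorship outcome where the constraint k is applied only to the sincere students' preferences): every Nash equilibrium (P_N, P'_M) of (SD^k, P) satisfies SD^k(P_N, P'_M, ≻, q) = SD(P^k_N, P_M, ≻, q), and such a Nash equilibrium exists. -/

import Mathlib

/-!
School choice framework following Bonkoungou–Nesterov,
"Reforms meet fairness concerns in school and college admissions".

Students `I` and schools `S` are finite types with `|I| > |S|`.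
A strict preference relation of a student over `S ∪ {∅}` is represented by a list
of `Option S` containing every element exactly once (earlier = more preferred);
`none` is the outside option.  A strict priority order of a school is a list of
`I` containing every student exactly once (earlier = higher priority).
-/

namespace SchoolChoice

variable {I S : Type*} [Fintype I] [DecidableEq I] [Fintype S] [DecidableEq S]

/-- `p` is a strict preference relation on `S ∪ {∅}`: a ranking list containing every
element of `Option S` exactly once. -/
def ValidPref (p : List (Option S)) : Prop := p.Nodup ∧ ∀ x : Option S, x ∈ p

/-- `pr` is a strict priority order: a ranking list containing every student exactly once. -/
def ValidPrio (pr : List I) : Prop := pr.Nodup ∧ ∀ i : I, i ∈ pr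

/-- `a` is strictly preferred to `b` under the preference relation `p`. -/
def prefLt (p : List (Option S)) (a b : Option S) : Prop := p.idxOf a < p.idxOf b

/-- `i` has strictly higher priority than `j` under the priority order `pr`. -/
def prioLt (pr : List I) (i j : I) : Prop := pr.idxOf i < pr.idxOf j

instance (p : List (Option S)) (a b : Option S) : Decidable (prefLt p a b) :=
  inferInstanceAs (Decidable (_ < _))

instance (pr : List I) (i j : I) : Decidable (prioLt pr i j) :=
  inferInstanceAs (Decidable (_ < _))

/-- The acceptable schools of `p` (those preferred to the outside option), in preference
order. -/
def acceptables (p : List (Option S)) : List S := (p.takeWhile Option.isSome).filterMap id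

/-- The truncation of `p` after its `k`-th acceptable school: the preference relation
listing, in the same order, only the `min k _` most-preferred acceptable schools of `p`,
all other schools being unacceptable (kept below `none` in their original order). -/
def truncate (p : List (Option S)) (k : ℕ) : List (Option S) :=
  ((acceptables p).take k).map some ++
    none :: p.filter (fun x => decide (x ≠ none ∧ x ∉ ((acceptables p).take k).map some))

/-- `μ` is a matching: it respects the capacities `q`. -/
def IsMatching (q : S → ℕ) (μ : I → Option S) : Prop :=
  ∀ s : S, (Finset.univ.filter (fun i => μ i = some s)).card ≤ q s

/-- The pair `(i, s)` blocks `μ` under the problem `(P, prio, q)`. -/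
def Blocks (P : I → List (Option S)) (prio : S → List I) (q : S → ℕ)
    (μ : I → Option S) (i : I) (s : S) : Prop :=
  prefLt (P i) (some s) (μ i) ∧
    ((Finset.univ.filter (fun j => μ j = some s)).card < q s ∨
      ∃ j : I, μ j = some s ∧ prioLt (prio s) i j)

/-- `i` is a blocking student for `μ` under `(P, prio, q)`. -/
def BlockingStudent (P : I → List (Option S)) (prio : S → List I) (q : S → ℕ)
    (μ : I → Option S) (i : I) : Prop :=
  ∃ s : S, Blocks P prio q μ i s

/-- `μ` is individually rational under `P`. -/
def IndividuallyRational (P : I → List (Option S)) (μ : I → Option S) : Prop :=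
  ∀ i : I, ¬ prefLt (P i) none (μ i)

/-- `μ` is stable at `(P, prio, q)`. -/
def IsStable (P : I → List (Option S)) (prio : S → List I) (q : S → ℕ)
    (μ : I → Option S) : Prop :=
  IndividuallyRational P μ ∧ ∀ i : I, ¬ BlockingStudent P prio q μ i

/-- The number of blocking students for `μ` under `(P, prio, q)`. -/
noncomputable def numBlocking (P : I → List (Option S)) (prio : S → List I) (q : S → ℕ)
    (μ : I → Option S) : ℕ :=
  {i : I | BlockingStudent P prio q μ i}.ncard

/-! ### The Gale–Shapley student-proposing deferred acceptance mechanism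

The state `σ : I → ℕ` records, for each student, how many of her acceptable schools
have already rejected her; she currently applies to the `σ i`-th school on her list
(if any).  At each round every school tentatively keeps the `q s` highest-priority
students among its current applicants and rejects the rest, who move on. -/

/-- The school student `i` currently applies to. -/
def daTarget (P : I → List (Option S)) (σ : I → ℕ) (i : I) : Option S :=
  (acceptables (P i))[σ i]?

/-- The students tentatively held by school `s`: the `q s` highest-priority current
applicants. -/
def daHeld (P : I → List (Option S)) (prio : S → List I) (q : S → ℕ)
    (σ : I → ℕ) (s : S) : List I :=
  ((prio s).filter (fun i => decide (daTarget P σ i = some s))).take (q s)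

/-- One round of deferred acceptance: every rejected student moves to her next choice. -/
def daStep (P : I → List (Option S)) (prio : S → List I) (q : S → ℕ)
    (σ : I → ℕ) : I → ℕ := fun i =>
  match daTarget P σ i with
  | none => σ i
  | some s => if i ∈ daHeld P prio q σ s then σ i else σ i + 1

/-- The Gale–Shapley (student-proposing deferred acceptance) mechanism.  Iterating the
round map `|I| * |S| + 1` times is guaranteed to reach the terminal state. -/
def GS (P : I → List (Option S)) (prio : S → List I) (q : S → ℕ) : I → Option S :=
  fun i =>
    let σ := (daStep P prio q)^[Fintype.card I * Fintype.card S + 1] (fun _ => 0)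
    match daTarget P σ i with
    | none => none
    | some s => if i ∈ daHeld P prio q σ s then some s else none

/-- The constrained Gale–Shapley mechanism `GS^k`. -/
def GSk (k : ℕ) (P : I → List (Option S)) (prio : S → List I) (q : S → ℕ) : I → Option S :=
  GS (fun i => truncate (P i) k) prio q

/-! ### The Boston (immediate acceptance) mechanism -/

/-- Round `t` of the Boston mechanism: each not-yet-accepted student applies to her
`t`-th ranked acceptable school (0-indexed), and each school permanently accepts, up to
its remaining capacity, its highest-priority new applicants. -/
def bostonRound (P : I → List (Option S)) (prio : S → List I) (q : S → ℕ)
    (μ : I → Option S) (t : ℕ) : I → Option S := fun i =>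
  match μ i with
  | some s => some s
  | none =>
    match (acceptables (P i))[t]? with
    | none => none
    | some s =>
      if i ∈ ((prio s).filter
            (fun j => decide (μ j = none ∧ (acceptables (P j))[t]? = some s))).take
          (q s - (Finset.univ.filter (fun j => μ j = some s)).card)
      then some s else none

/-- The Boston (immediate acceptance) mechanism. -/
def Boston (P : I → List (Option S)) (prio : S → List I) (q : S → ℕ) : I → Option S :=
  (List.range (Fintype.card S)).foldl (bostonRound P prio q) (fun _ => none)

/-- The constrained Boston mechanism `β^k`. -/
def Bostonk (k : ℕ) (P : I → List (Option S)) (prio : S → List I) (q : S → ℕ) :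
    I → Option S :=
  Boston (fun i => truncate (P i) k) prio q

/-! ### The first-preference-first mechanism -/

/-- The adjusted priority profile: each first-preference-first school (member of `fpf`)
ranks students first by the rank they assign to it under `P` (counting the ranking of the
outside option as well), ties broken by the original priority; equal-preference schools
keep their original priority. -/
def fpfPrio (fpf : Finset S) (P : I → List (Option S)) (prio : S → List I) : S → List I :=
  fun s =>
    if s ∈ fpf then
      (List.range (Fintype.card S + 1)).flatMap
        (fun r => (prio s).filter (fun i => decide ((P i).idxOf (some s) = r)))
    else prio s

/-- The first-preference-first mechanism with set `fpf` of first-preference-first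
schools: Gale–Shapley run on the adjusted priorities. -/
def FPF (fpf : Finset S) (P : I → List (Option S)) (prio : S → List I) (q : S → ℕ) :
    I → Option S :=
  GS P (fpfPrio fpf P prio) q

/-- The constrained first-preference-first mechanism `FPF^k`. -/
def FPFk (fpf : Finset S) (k : ℕ) (P : I → List (Option S)) (prio : S → List I)
    (q : S → ℕ) : I → Option S :=
  FPF fpf (fun i => truncate (P i) k) prio q

/-! ### Manipulation and equilibrium notions -/

/-- Student `i` is a manipulating student of the mechanism `φ` (with priorities and
capacities fixed) at the true profile `P`. -/
def ManipulatingStudent (φ : (I → List (Option S)) → I → Option S)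
    (P : I → List (Option S)) (i : I) : Prop :=
  ∃ Q : List (Option S), ValidPref Q ∧
    prefLt (P i) (φ (Function.update P i Q) i) (φ P i)

/-- The mechanism `φ` is not manipulable at `P`. -/
def NotManipulable (φ : (I → List (Option S)) → I → Option S)
    (P : I → List (Option S)) : Prop :=
  ∀ i : I, ¬ ManipulatingStudent φ P i

/-- `P'` is a Nash equilibrium of the game `(φ, P)` in which the sophisticated students
are the members of `M` (who may misreport, and best respond) and all other (sincere)
students report truthfully. -/
def NashEq (φ : (I → List (Option S)) → I → Option S) (P : I → List (Option S))
    (M : Finset I) (P' : I → List (Option S)) : Prop :=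
  (∀ i, ValidPref (P' i)) ∧ (∀ i ∉ M, P' i = P i) ∧
    ∀ i ∈ M, ∀ Q : List (Option S), ValidPref Q →
      ¬ prefLt (P i) (φ (Function.update P' i Q) i) (φ P' i)

/-! ### Semi-sophisticated students -/

/-- Student `i` is guaranteed her first choice `s`: `s` is her most-preferred acceptable
school and `i` is among the `q s` highest-priority students at `s`. -/
def GuaranteedFirstChoice (P : I → List (Option S)) (prio : S → List I) (q : S → ℕ)
    (i : I) (s : S) : Prop :=
  (acceptables (P i)).head? = some s ∧ (prio s).idxOf i < q s

instance (P : I → List (Option S)) (prio : S → List I) (q : S → ℕ) (i : I) (s : S) :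
    Decidable (GuaranteedFirstChoice P prio q i s) :=
  inferInstanceAs (Decidable (_ ∧ _))

/-- School `s` is competitive: at least `q s` students are guaranteed their first
choice `s`. -/
def Competitive (P : I → List (Option S)) (prio : S → List I) (q : S → ℕ) (s : S) : Prop :=
  q s ≤ (Finset.univ.filter (fun i => GuaranteedFirstChoice P prio q i s)).card

instance (P : I → List (Option S)) (prio : S → List I) (q : S → ℕ) (s : S) :
    Decidable (Competitive P prio q s) :=
  inferInstanceAs (Decidable (_ ≤ _))

/-- `P'` is a Nash equilibrium of the game `(GS^ℓ, P)` with semi-sophisticated students: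
every student guaranteed her first choice reports truthfully; every other student reports
truthfully if she has at most `ℓ` acceptable schools or all her acceptable schools are
competitive, and otherwise lists as acceptable, in the order given by her true preference,
only her acceptable schools that are not competitive. -/
def SemiSophProfile (ℓ : ℕ) (P : I → List (Option S)) (prio : S → List I) (q : S → ℕ)
    (P' : I → List (Option S)) : Prop :=
  ∀ i : I,
    ((∃ s : S, GuaranteedFirstChoice P prio q i s) → P' i = P i) ∧
    (¬ (∃ s : S, GuaranteedFirstChoice P prio q i s) →
      (((acceptables (P i)).length ≤ ℓ ∨ ∀ s ∈ acceptables (P i), Competitive P prio q s) →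
          P' i = P i) ∧
      (¬ ((acceptables (P i)).length ≤ ℓ ∨
            ∀ s ∈ acceptables (P i), Competitive P prio q s) →
          acceptables (P' i) =
            (acceptables (P i)).filter (fun s => decide (¬ Competitive P prio q s))))


/-! ### Auxiliary list lemmas -/

section ListLemmas
set_option linter.unusedSectionVars false
variable {α : Type*} [BEq α] [LawfulBEq α]

lemma idxOf_cons_self (a : α) (l : List α) : (a :: l).idxOf a = 0 := by
  simp [List.idxOf_cons]

lemma idxOf_cons_ne {a b : α} (l : List α) (h : b ≠ a) :
    (b :: l).idxOf a = l.idxOf a + 1 := by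
  have hb : (b == a) = false := beq_eq_false_iff_ne.2 h
  simp [List.idxOf_cons, hb]

lemma idxOf_lt_length_iff {a : α} : ∀ {l : List α}, l.idxOf a < l.length ↔ a ∈ l
  | [] => by simp [List.idxOf_nil]
  | b :: t => by
    by_cases h : b = a
    · subst h; simp [idxOf_cons_self]
    · rw [idxOf_cons_ne t h]
      simp only [List.length_cons, List.mem_cons]
      have ih := idxOf_lt_length_iff (a := a) (l := t)
      constructor
      · intro hlt; exact Or.inr (ih.1 (by omega))
      · rintro (rfl | hm)
        · exact absurd rfl h
        · have := ih.2 hm; omega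

lemma getElem_idxOf {a : α} : ∀ {l : List α} (h : l.idxOf a < l.length),
    l[l.idxOf a] = a
  | [], h => by simp at h
  | b :: t, h => by
    by_cases hb : b = a
    · subst hb; simp [idxOf_cons_self]
    · have e : (b :: t).idxOf a = t.idxOf a + 1 := idxOf_cons_ne t hb
      have h' : t.idxOf a < t.length := by
        rw [e] at h; simpa using h
      simp only [e, List.getElem_cons_succ]
      exact getElem_idxOf h'

lemma idxOf_getElem : ∀ {l : List α}, l.Nodup → ∀ (i : ℕ) (h : i < l.length),
    l.idxOf l[i] = i
  | [], _, i, h => by simp at h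
  | b :: t, hnd, 0, h => by simp [idxOf_cons_self]
  | b :: t, hnd, i+1, h => by
    obtain ⟨hb, hnd'⟩ := List.nodup_cons.1 hnd
    have hi : i < t.length := by simpa using h
    have hm : t[i] ∈ t := List.getElem_mem _
    have hne : b ≠ t[i] := fun e => hb (e ▸ hm)
    rw [List.getElem_cons_succ, idxOf_cons_ne t hne, idxOf_getElem hnd' i hi]

lemma idxOf_append_of_mem {a : α} : ∀ {l₁ : List α} (_ : a ∈ l₁) (l₂ : List α),
    (l₁ ++ l₂).idxOf a = l₁.idxOf a
  | [], h, _ => by simp at h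
  | b :: t, h, l₂ => by
    by_cases hb : b = a
    · subst hb; simp [idxOf_cons_self]
    · have ht : a ∈ t := by
        rcases List.mem_cons.1 h with h' | h'
        · exact absurd h'.symm hb
        · exact h'
      rw [List.cons_append, idxOf_cons_ne _ hb, idxOf_cons_ne _ hb,
        idxOf_append_of_mem ht l₂]

lemma idxOf_append_of_not_mem {a : α} : ∀ {l₁ : List α} (_ : a ∉ l₁) (l₂ : List α),
    (l₁ ++ l₂).idxOf a = l₁.length + l₂.idxOf a
  | [], _, _ => by simp
  | b :: t, h, l₂ => by
    have hb : b ≠ a := fun e => h (e ▸ (List.mem_cons_self (a := b) (l := t)))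
    have ht : a ∉ t := fun e => h (List.mem_cons_of_mem _ e)
    rw [List.cons_append, idxOf_cons_ne _ hb, idxOf_append_of_not_mem ht l₂,
      List.length_cons]
    omega

lemma mem_take_iff_indexOf : ∀ (l : List α) (n : ℕ) (a : α), a ∈ l →
    (a ∈ l.take n ↔ l.idxOf a < n)
  | [], n, a => by simp
  | b :: t, 0, a => by simp
  | b :: t, n+1, a => by
    intro ha
    by_cases hab : a = b
    · subst hab; simp [idxOf_cons_self]
    · have ht : a ∈ t := by
        rcases List.mem_cons.1 ha with h | h
        · exact absurd h hab
        · exact h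
      rw [List.take_succ_cons, idxOf_cons_ne _ (Ne.symm hab)]
      simp only [List.mem_cons, hab, false_or]
      rw [mem_take_iff_indexOf t n a ht]
      omega

lemma pairwise_indexOf_lt {l : List α} (h : l.Nodup) :
    l.Pairwise (fun a b => l.idxOf a < l.idxOf b) := by
  rw [List.pairwise_iff_getElem]
  intro i j hi hj hij
  rw [idxOf_getElem h i hi, idxOf_getElem h j hj]
  exact hij

lemma find?_min {pred : α → Bool} : ∀ {l : List α} {a b : α},
    l.find? pred = some a → b ∈ l → pred b = true → l.idxOf a ≤ l.idxOf b
  | [], a, b => by simp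
  | c :: t, a, b => by
    intro h hb hpb
    by_cases hc : pred c
    · rw [List.find?_cons_of_pos (l := _) hc] at h
      injection h with h; subst h
      simp [idxOf_cons_self]
    · rw [List.find?_cons_of_neg (l := _) hc] at h
      have hbc : b ≠ c := fun e => hc (e ▸ hpb)
      have hac : a ≠ c := by
        rintro rfl
        exact hc (List.find?_some h)
      rw [idxOf_cons_ne _ (Ne.symm hac), idxOf_cons_ne _ (Ne.symm hbc)]
      have hbt : b ∈ t := by
        rcases List.mem_cons.1 hb with h' | h'
        · exact absurd h' hbc
        · exact h'
      exact Nat.succ_le_succ (find?_min h hbt hpb)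

lemma indexOf_inj {l : List α} {a b : α} (ha : a ∈ l) (hb : b ∈ l)
    (h : l.idxOf a = l.idxOf b) : a = b := by
  have h1 := getElem_idxOf (idxOf_lt_length_iff.2 ha)
  have h2 := getElem_idxOf (idxOf_lt_length_iff.2 hb)
  rw [← h1, ← h2]
  congr 1

lemma sublist_order {pr F : List α} (hnd : pr.Nodup) (hsub : F.Sublist pr)
    {a b : α} (ha : a ∈ F) (hb : b ∈ F) (hab : F.idxOf a < F.idxOf b) :
    pr.idxOf a < pr.idxOf b := by
  have hFP : F.Pairwise (fun a b => pr.idxOf a < pr.idxOf b) :=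
    List.Pairwise.sublist hsub (pairwise_indexOf_lt hnd)
  have h2 := List.pairwise_iff_getElem.1 hFP (F.idxOf a) (F.idxOf b)
    (idxOf_lt_length_iff.2 ha) (idxOf_lt_length_iff.2 hb) hab
  rwa [getElem_idxOf, getElem_idxOf] at h2

lemma dropWhile_head_false {q : α → Bool} : ∀ {l : List α} {x : α} {xs : List α},
    l.dropWhile q = x :: xs → q x = false
  | [], x, xs => by simp
  | a :: t, x, xs => by
    intro h
    by_cases ha : q a
    · rw [List.dropWhile_cons_of_pos ha] at h
      exact dropWhile_head_false h
    · rw [List.dropWhile_cons_of_neg ha] at h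
      injection h with h1 _
      subst h1
      simpa using ha

end ListLemmas

section CountLemmas
set_option linter.unusedSectionVars false
variable {I : Type*} [Fintype I] [DecidableEq I]

lemma card_before_filter (pr : List I) (hnd : pr.Nodup) (hcm : ∀ j : I, j ∈ pr)
    (p : I → Bool) (i : I) (hpi : p i = true) :
    (Finset.univ.filter (fun j => pr.idxOf j < pr.idxOf i ∧ p j = true)).card
      = (pr.filter p).idxOf i := by
  set F := pr.filter p with hF
  have hiF : i ∈ F := List.mem_filter.2 ⟨hcm i, hpi⟩
  have hFnd : F.Nodup := (List.filter_sublist (l := pr)).nodup hnd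
  set m := F.idxOf i with hm'
  have hm : m < F.length := idxOf_lt_length_iff.2 hiF
  have key : Finset.univ.filter (fun j => pr.idxOf j < pr.idxOf i ∧ p j = true)
      = (F.take m).toFinset := by
    ext j
    simp only [Finset.mem_filter, Finset.mem_univ, true_and, List.mem_toFinset]
    constructor
    · rintro ⟨hlt, hpj⟩
      have hjF : j ∈ F := List.mem_filter.2 ⟨hcm j, hpj⟩
      rw [mem_take_iff_indexOf F m j hjF]
      rcases lt_trichotomy (F.idxOf j) m with h | h | h
      · exact h
      · exact absurd hlt (by simp [indexOf_inj hjF hiF h])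
      · exact absurd (sublist_order hnd (List.filter_sublist (l := pr)) hiF hjF h)
          (by omega)
    · intro hj
      have hjF : j ∈ F := List.mem_of_mem_take hj
      refine ⟨?_, (List.mem_filter.1 hjF).2⟩
      exact sublist_order hnd (List.filter_sublist (l := pr)) hjF hiF
        ((mem_take_iff_indexOf F m j hjF).1 hj)
  rw [key, List.toFinset_card_of_nodup ((List.take_sublist m F).nodup hFnd),
    List.length_take, min_eq_left (le_of_lt hm)]

lemma mem_filter_take_iff (pr : List I) (hnd : pr.Nodup) (hcm : ∀ j : I, j ∈ pr)
    (p : I → Bool) (i : I) (hpi : p i = true) (n : ℕ) :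
    i ∈ (pr.filter p).take n ↔
      (Finset.univ.filter (fun j => pr.idxOf j < pr.idxOf i ∧ p j = true)).card < n := by
  rw [card_before_filter pr hnd hcm p i hpi,
    mem_take_iff_indexOf _ n i (List.mem_filter.2 ⟨hcm i, hpi⟩)]

end CountLemmas

/-! ### Structure of valid preference lists -/

section PrefLemmas
set_option linter.unusedSectionVars false
variable {S : Type*} [DecidableEq S]

lemma allSome_eq_map (l : List (Option S)) (h : ∀ x ∈ l, x.isSome) :
    (l.filterMap id).map some = l := by
  induction l with
  | nil => simp
  | cons x t ih =>
    cases x with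
    | none => simpa using h none (by simp)
    | some a =>
      simp only [List.filterMap_cons, id_eq, List.map_cons]
      exact congrArg (some a :: ·) (ih (fun x hx => h x (List.mem_cons_of_mem _ hx)))

lemma map_some_acceptables (p : List (Option S)) :
    (acceptables p).map some = p.takeWhile Option.isSome :=
  allSome_eq_map _ (fun _ hx => List.mem_takeWhile_imp hx)

lemma acceptables_nodup {p : List (Option S)} (hnd : p.Nodup) : (acceptables p).Nodup := by
  have h1 : (p.takeWhile Option.isSome).Nodup := (List.takeWhile_sublist _).nodup hnd
  rw [← map_some_acceptables p] at h1
  exact h1.of_map some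

lemma indexOf_map_some (A : List S) (s : S) :
    (A.map some).idxOf (some s) = A.idxOf s := by
  induction A with
  | nil => simp
  | cons a t ih =>
    by_cases h : s = a
    · subst h
      rw [List.map_cons, idxOf_cons_self, idxOf_cons_self]
    · rw [List.map_cons, idxOf_cons_ne _ (by simpa using Ne.symm h),
        idxOf_cons_ne _ (Ne.symm h), ih]

lemma dropWhile_none {p : List (Option S)} (hcm : ∀ x, x ∈ p) :
    ∃ t, p.dropWhile Option.isSome = none :: t := by
  cases h : p.dropWhile Option.isSome with
  | nil =>
    exfalso
    have h3 := List.takeWhile_append_dropWhile (p := Option.isSome) (l := p)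
    rw [h, List.append_nil] at h3
    have h2 : (none : Option S) ∈ p.takeWhile Option.isSome := by
      rw [h3]; exact hcm none
    simpa using List.mem_takeWhile_imp h2
  | cons x t =>
    have hx : Option.isSome x = false := dropWhile_head_false h
    have hxn : x = none := Option.not_isSome_iff_eq_none.1 (by simp [hx])
    refine ⟨t, ?_⟩
    rw [hxn]

lemma indexOf_none_eq {p : List (Option S)} (hcm : ∀ x, x ∈ p) :
    p.idxOf none = (acceptables p).length := by
  obtain ⟨t, ht⟩ := dropWhile_none hcm
  have hnm : (none : Option S) ∉ p.takeWhile Option.isSome :=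
    fun h => by simpa using List.mem_takeWhile_imp h
  conv_lhs => rw [← List.takeWhile_append_dropWhile (p := Option.isSome) (l := p)]
  rw [idxOf_append_of_not_mem hnm, ht, idxOf_cons_self, Nat.add_zero,
    ← map_some_acceptables p, List.length_map]

lemma indexOf_acceptable {p : List (Option S)} {s : S} (hs : s ∈ acceptables p) :
    p.idxOf (some s) = (acceptables p).idxOf s := by
  conv_lhs => rw [← List.takeWhile_append_dropWhile (p := Option.isSome) (l := p)]
  rw [idxOf_append_of_mem
      (by rw [← map_some_acceptables p]; exact List.mem_map_of_mem (f := some) hs) _,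
    ← map_some_acceptables p, indexOf_map_some]

lemma indexOf_acceptable_lt_none {p : List (Option S)} (hcm : ∀ x, x ∈ p)
    {s : S} (hs : s ∈ acceptables p) :
    p.idxOf (some s) < p.idxOf none := by
  rw [indexOf_acceptable hs, indexOf_none_eq hcm]
  exact idxOf_lt_length_iff.2 hs

lemma indexOf_none_lt_unacceptable {p : List (Option S)} (hcm : ∀ x, x ∈ p)
    {s : S} (hs : s ∉ acceptables p) :
    p.idxOf none < p.idxOf (some s) := by
  obtain ⟨t, ht⟩ := dropWhile_none hcm
  have hnm : (some s) ∉ p.takeWhile Option.isSome := by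
    rw [← map_some_acceptables p]
    intro h
    exact hs (by simpa using h)
  conv_rhs => rw [← List.takeWhile_append_dropWhile (p := Option.isSome) (l := p)]
  rw [idxOf_append_of_not_mem hnm, ht,
    idxOf_cons_ne _ (by simp : (none : Option S) ≠ some s),
    indexOf_none_eq hcm, ← map_some_acceptables p, List.length_map]
  omega

lemma mem_acceptables_of_indexOf_lt {p : List (Option S)} (hcm : ∀ x, x ∈ p)
    {s : S} (h : p.idxOf (some s) < p.idxOf none) : s ∈ acceptables p := by
  by_contra hs
  exact absurd (indexOf_none_lt_unacceptable hcm hs) (by omega)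

lemma filterMap_id_map_some (l : List S) : (l.map some).filterMap id = l := by
  induction l with
  | nil => simp
  | cons a t ih => simp [List.filterMap_cons, ih]

lemma takeWhile_map_some_append (l : List S) (r : List (Option S)) :
    ((l.map some ++ none :: r).takeWhile Option.isSome) = l.map some := by
  induction l with
  | nil => simp [List.takeWhile_cons_of_neg]
  | cons a t ih =>
    simp only [List.map_cons, List.cons_append,
      List.takeWhile_cons_of_pos (by simp : Option.isSome (some a) = true), ih]

lemma acceptables_truncate (p : List (Option S)) (k : ℕ) :
    acceptables (truncate p k) = (acceptables p).take k := by
  unfold truncate acceptables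
  rw [takeWhile_map_some_append, filterMap_id_map_some]

end PrefLemmas

/-! ### The serial dictatorship (greedy) characterisation -/

section Greedy
set_option linter.unusedSectionVars false
variable {I S : Type*} [Fintype I] [DecidableEq I] [Fintype S] [DecidableEq S]

/-- The greedy (serial-dictatorship) assignment after processing the first `n`
students of the common priority order `pr`. -/
def gr (P : I → List (Option S)) (pr : List I) (q : S → ℕ) : ℕ → I → Option S
  | 0 => fun _ => none
  | n+1 =>
    if h : n < pr.length then
      Function.update (gr P pr q n) pr[n]
        ((acceptables (P pr[n])).find? fun s =>
          decide ((Finset.univ.filter fun j' => gr P pr q n j' = some s).card < q s))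
    else gr P pr q n

/-- The greedy (serial-dictatorship) matching. -/
def mu (P : I → List (Option S)) (pr : List I) (q : S → ℕ) : I → Option S :=
  gr P pr q pr.length

/-- The number of students before `i` in the priority order assigned to `s`. -/
def abf (P : I → List (Option S)) (pr : List I) (q : S → ℕ) (i : I) (s : S) : ℕ :=
  (Finset.univ.filter fun j => pr.idxOf j < pr.idxOf i ∧ mu P pr q j = some s).card

variable {P P₁ P₂ : I → List (Option S)} {pr : List I} {q : S → ℕ}

lemma gr_eq_none (hnd : pr.Nodup) :
    ∀ (n : ℕ) (i : I), n ≤ pr.idxOf i → gr P pr q n i = none := by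
  intro n
  induction n with
  | zero => intro i _; rfl
  | succ n ih =>
    intro i hi
    show gr P pr q (n+1) i = none
    rw [gr]
    by_cases h : n < pr.length
    · rw [dif_pos h]
      have hjn : pr.idxOf pr[n] = n := idxOf_getElem hnd n h
      have hji : pr[n] ≠ i := by
        rintro rfl
        omega
      rw [Function.update_of_ne (Ne.symm hji)]
      exact ih i (by omega)
    · rw [dif_neg h]
      exact ih i (by omega)

lemma gr_stable (hnd : pr.Nodup) {i : I} {n m : ℕ}
    (hn : pr.idxOf i < n) (hnm : n ≤ m) : gr P pr q m i = gr P pr q n i := by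
  induction m, hnm using Nat.le_induction with
  | base => rfl
  | succ m hm ih =>
    show gr P pr q (m+1) i = gr P pr q n i
    rw [gr]
    by_cases h : m < pr.length
    · rw [dif_pos h]
      have hjn : pr.idxOf pr[m] = m := idxOf_getElem hnd m h
      have hji : pr[m] ≠ i := by
        rintro rfl
        omega
      rw [Function.update_of_ne (Ne.symm hji)]
      exact ih
    · rw [dif_neg h]
      exact ih

lemma mu_eq_gr (hnd : pr.Nodup) {i : I} (hi : i ∈ pr) :
    mu P pr q i = gr P pr q (pr.idxOf i + 1) i :=
  gr_stable hnd (Nat.lt_succ_self _) (idxOf_lt_length_iff.2 hi)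

lemma mu_formula (hnd : pr.Nodup) (hcm : ∀ j : I, j ∈ pr) (i : I) :
    mu P pr q i = (acceptables (P i)).find? fun s =>
      decide (abf P pr q i s < q s) := by
  have hi : i ∈ pr := hcm i
  set m := pr.idxOf i with hm'
  have hm : m < pr.length := idxOf_lt_length_iff.2 hi
  rw [mu_eq_gr hnd hi]
  show gr P pr q (m+1) i = _
  rw [gr, dif_pos hm]
  have hg : pr[m] = i := getElem_idxOf hm
  rw [hg, Function.update_self]
  have hset : ∀ s : S, (Finset.univ.filter fun j' => gr P pr q m j' = some s)
      = (Finset.univ.filter fun j => pr.idxOf j < pr.idxOf i ∧ mu P pr q j = some s) := by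
    intro s
    ext j
    simp only [Finset.mem_filter, Finset.mem_univ, true_and]
    constructor
    · intro hj
      by_cases hlt : pr.idxOf j < m
      · refine ⟨hlt, ?_⟩
        rw [mu, gr_stable hnd hlt (by omega : m ≤ pr.length)]
        exact hj
      · rw [gr_eq_none hnd m j (by omega)] at hj
        exact absurd hj (by simp)
    · rintro ⟨hlt, hj⟩
      rw [mu, gr_stable hnd hlt (by omega : m ≤ pr.length)] at hj
      exact hj
  have hf : (fun s => decide ((Finset.univ.filter fun j' => gr P pr q m j' = some s).card < q s))
      = fun s => decide (abf P pr q i s < q s) := by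
    funext s
    simp only [abf]
    rw [hset s]
    congr
  rw [hf]

lemma gr_congr (hnd : pr.Nodup) :
    ∀ (n : ℕ), (∀ j : I, pr.idxOf j < n → P₁ j = P₂ j) →
      gr P₁ pr q n = gr P₂ pr q n := by
  intro n
  induction n with
  | zero => intro _; rfl
  | succ n ih =>
    intro h
    have hrec := ih (fun j hj => h j (by omega))
    show gr P₁ pr q (n+1) = gr P₂ pr q (n+1)
    rw [gr, gr]
    by_cases hl : n < pr.length
    · rw [dif_pos hl, dif_pos hl, hrec,
        h pr[n] (by rw [idxOf_getElem hnd n hl]; omega)]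
    · rw [dif_neg hl, dif_neg hl, hrec]

lemma abf_congr (hnd : pr.Nodup) {i : I}
    (h : ∀ j : I, pr.idxOf j < pr.idxOf i → mu P₁ pr q j = mu P₂ pr q j) :
    abf P₁ pr q i = abf P₂ pr q i := by
  funext s
  rw [abf, abf]
  congr 1
  ext j
  simp only [Finset.mem_filter, Finset.mem_univ, true_and, and_congr_right_iff]
  intro hlt
  rw [h j hlt]

lemma abf_update (hnd : pr.Nodup) (hcm : ∀ j : I, j ∈ pr) {i : I} {Q : List (Option S)} :
    abf (Function.update P i Q) pr q i = abf P pr q i := by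
  funext s
  rw [abf, abf]
  congr 1
  ext j
  simp only [Finset.mem_filter, Finset.mem_univ, true_and, and_congr_right_iff]
  intro hlt
  rw [mu_eq_gr hnd (hcm j), mu_eq_gr hnd (hcm j),
    gr_congr (P₁ := Function.update P i Q) (P₂ := P) hnd (pr.idxOf j + 1)
      (fun j' hj' => Function.update_of_ne (by rintro rfl; omega) _ _)]

end Greedy

/-! ### Gale–Shapley with a common priority equals serial dictatorship -/

section GSmu
set_option linter.unusedSectionVars false
variable {I S : Type*} [Fintype I] [DecidableEq I] [Fintype S] [DecidableEq S]

/-- The rank of student `i`'s greedy school in her list of acceptable schools. -/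
def rnk (P : I → List (Option S)) (pr : List I) (q : S → ℕ) (i : I) : ℕ :=
  ((mu P pr q i).map fun s => (acceptables (P i)).idxOf s).getD
    (acceptables (P i)).length

variable {P : I → List (Option S)} {prio : S → List I} {q : S → ℕ} {pr : List I}

lemma rnk_of_some {i : I} {s : S} (h : mu P pr q i = some s) :
    rnk P pr q i = (acceptables (P i)).idxOf s := by
  simp [rnk, h]

lemma rnk_of_none {i : I} (h : mu P pr q i = none) :
    rnk P pr q i = (acceptables (P i)).length := by
  simp [rnk, h]

lemma mu_mem_acceptables (hnd : pr.Nodup) (hcm : ∀ j : I, j ∈ pr) {i : I} {s : S}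
    (h : mu P pr q i = some s) : s ∈ acceptables (P i) := by
  rw [mu_formula hnd hcm] at h
  exact List.mem_of_find?_eq_some h

lemma mu_avail (hnd : pr.Nodup) (hcm : ∀ j : I, j ∈ pr) {i : I} {s : S}
    (h : mu P pr q i = some s) : abf P pr q i s < q s := by
  rw [mu_formula hnd hcm] at h
  simpa using List.find?_some h

lemma rnk_le_length (hnd : pr.Nodup) (hcm : ∀ j : I, j ∈ pr) (i : I) :
    rnk P pr q i ≤ (acceptables (P i)).length := by
  cases h : mu P pr q i with
  | none => rw [rnk_of_none h]
  | some s =>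
    rw [rnk_of_some h]
    exact le_of_lt (idxOf_lt_length_iff.2 (mu_mem_acceptables hnd hcm h))

lemma getElem?_rnk (hnd : pr.Nodup) (hcm : ∀ j : I, j ∈ pr) (i : I) :
    (acceptables (P i))[rnk P pr q i]? = mu P pr q i := by
  cases h : mu P pr q i with
  | none =>
    rw [rnk_of_none h]
    exact List.getElem?_eq_none le_rfl
  | some s =>
    have hmem := mu_mem_acceptables hnd hcm h
    have hlt : (acceptables (P i)).idxOf s < (acceptables (P i)).length :=
      idxOf_lt_length_iff.2 hmem
    rw [rnk_of_some h, List.getElem?_eq_getElem hlt, getElem_idxOf hlt]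

/-- A school strictly better (in `i`'s list) than `i`'s greedy school is unavailable. -/
lemma not_avail_of_lt_rnk (hnd : pr.Nodup) (hcm : ∀ j : I, j ∈ pr) {i : I} {s : S}
    (hs : s ∈ acceptables (P i)) (hlt : (acceptables (P i)).idxOf s < rnk P pr q i) :
    ¬ abf P pr q i s < q s := by
  intro habf
  cases h : mu P pr q i with
  | none =>
    rw [mu_formula hnd hcm, List.find?_eq_none] at h
    exact h s hs (decide_eq_true habf)
  | some s' =>
    have hfind : (acceptables (P i)).find? (fun s => decide (abf P pr q i s < q s))
        = some s' := by rw [← mu_formula hnd hcm]; exact h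
    have hmin : (acceptables (P i)).idxOf s' ≤ (acceptables (P i)).idxOf s :=
      find?_min hfind hs (decide_eq_true habf)
    rw [rnk_of_some h] at hlt
    omega

lemma abf_mono {i j : I} (hij : pr.idxOf j < pr.idxOf i) (s : S) :
    abf P pr q j s ≤ abf P pr q i s := by
  apply Finset.card_le_card
  intro x hx
  simp only [Finset.mem_filter, Finset.mem_univ, true_and] at hx ⊢
  exact ⟨by omega, hx.2⟩

lemma daStep_le_rnk (hnd : pr.Nodup) (hcm : ∀ j : I, j ∈ pr)
    (hA : ∀ i : I, (acceptables (P i)).Nodup) (hprio : ∀ s, prio s = pr)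
    {σ : I → ℕ} (hσ : ∀ i, σ i ≤ rnk P pr q i) :
    ∀ i, daStep P prio q σ i ≤ rnk P pr q i := by
  intro i
  simp only [daStep]
  split
  · exact hσ i
  next s ht =>
    split
    · exact hσ i
    next hheld =>
      -- i applies to s and is rejected; show σ i < rnk i
      by_contra hc
      have hσi : σ i = rnk P pr q i := by have := hσ i; omega
      obtain ⟨hlen, hget⟩ := List.getElem?_eq_some_iff.1 ht
      -- mu i = some s
      have hmu : mu P pr q i = some s := by
        cases h : mu P pr q i with
        | none => rw [rnk_of_none h] at hσi; omega
        | some s' =>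
          have := getElem?_rnk hnd hcm (P := P) (q := q) i
          rw [h, ← hσi, List.getElem?_eq_getElem hlen, hget] at this
          injection this with this
          rw [this]
      have habf : abf P pr q i s < q s := mu_avail hnd hcm hmu
      -- rejection: at least q s targeting students before i
      rw [daHeld, hprio s] at hheld
      have hpt : (fun j => decide (daTarget P σ j = some s)) i = true := decide_eq_true ht
      rw [mem_filter_take_iff pr hnd hcm _ i hpt (q s)] at hheld
      push_neg at hheld
      -- the set of targeting students before i
      set B := Finset.univ.filter
        (fun j => pr.idxOf j < pr.idxOf i ∧ decide (daTarget P σ j = some s) = true)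
        with hB
      by_cases hex : ∃ j ∈ B, q s ≤ abf P pr q j s
      · obtain ⟨j, hjB, hj⟩ := hex
        have hjlt : pr.idxOf j < pr.idxOf i := by
          rw [hB] at hjB
          simp only [Finset.mem_filter, Finset.mem_univ, true_and] at hjB
          exact hjB.1
        have := abf_mono (P := P) (q := q) hjlt s
        omega
      · push_neg at hex
        have hall : ∀ j ∈ B, mu P pr q j = some s := by
          intro j hjB
          rw [hB] at hjB
          simp only [Finset.mem_filter, Finset.mem_univ, true_and] at hjB
          obtain ⟨hjlt, hjt⟩ := hjB
          have htj : daTarget P σ j = some s := of_decide_eq_true hjt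
          rw [daTarget] at htj
          obtain ⟨hlenj, hgetj⟩ := List.getElem?_eq_some_iff.1 htj
          have hsj : s ∈ acceptables (P j) := hgetj ▸ List.getElem_mem _
          have hσj := hσ j
          rcases Nat.lt_or_ge (σ j) (rnk P pr q j) with hl | hl
          · exfalso
            have hidx : (acceptables (P j)).idxOf s = σ j := by
              rw [← hgetj]
              exact idxOf_getElem (hA j) _ hlenj
            have := not_avail_of_lt_rnk (q := q) hnd hcm hsj (by omega)
            have habfj := hex j (by rw [hB]; simp only [Finset.mem_filter,
              Finset.mem_univ, true_and]; exact ⟨hjlt, hjt⟩)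
            omega
          · have hσj' : σ j = rnk P pr q j := by omega
            cases h : mu P pr q j with
            | none =>
              exfalso
              rw [rnk_of_none h] at hσj'
              omega
            | some s' =>
              have := getElem?_rnk hnd hcm (P := P) (q := q) j
              rw [h, ← hσj', List.getElem?_eq_getElem hlenj, hgetj] at this
              injection this with this
              rw [this]
        have hsub : B ⊆ Finset.univ.filter
            (fun j => pr.idxOf j < pr.idxOf i ∧ mu P pr q j = some s) := by
          intro j hjB
          have hm := hall j hjB
          rw [hB] at hjB
          simp only [Finset.mem_filter, Finset.mem_univ, true_and] at hjB ⊢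
          exact ⟨hjB.1, hm⟩
        have hcard : B.card ≤ abf P pr q i s := Finset.card_le_card hsub
        omega

lemma daStep_ge (σ : I → ℕ) (i : I) : σ i ≤ daStep P prio q σ i := by
  simp only [daStep]
  split
  · exact le_rfl
  · split
    · exact le_rfl
    · omega

lemma daStep_le_len {σ : I → ℕ} (hσ : ∀ i, σ i ≤ (acceptables (P i)).length) :
    ∀ i, daStep P prio q σ i ≤ (acceptables (P i)).length := by
  intro i
  simp only [daStep]
  split
  · exact hσ i
  next s ht =>
    split
    · exact hσ i
    · obtain ⟨hlen, _⟩ := List.getElem?_eq_some_iff.1 ht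
      omega

lemma iterate_le_len (t : ℕ) :
    ∀ i, (daStep P prio q)^[t] (fun _ => 0) i ≤ (acceptables (P i)).length := by
  induction t with
  | zero => intro i; simp
  | succ t ih =>
    rw [Function.iterate_succ_apply']
    exact daStep_le_len ih

lemma iterate_fixed_point (hA : ∀ i : I, (acceptables (P i)).Nodup) :
    daStep P prio q ((daStep P prio q)^[Fintype.card I * Fintype.card S + 1] (fun _ => 0))
      = (daStep P prio q)^[Fintype.card I * Fintype.card S + 1] (fun _ => 0) := by
  set f := daStep P prio q with hf
  set B := Fintype.card I * Fintype.card S with hBdef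
  have hW : ∀ t : ℕ, (∑ i : I, (f^[t] (fun _ => 0)) i) ≤ B := by
    intro t
    calc (∑ i : I, (f^[t] (fun _ => 0)) i)
        ≤ ∑ _i : I, Fintype.card S := by
          apply Finset.sum_le_sum
          intro i _
          exact le_trans (iterate_le_len t i) ((hA i).length_le_card)
      _ = B := by rw [Finset.sum_const, Finset.card_univ, smul_eq_mul, hBdef]
  have hstep : ∀ t : ℕ, f (f^[t] (fun _ => 0)) ≠ f^[t] (fun _ => 0) →
      (∑ i : I, (f^[t] (fun _ => 0)) i) < ∑ i : I, (f^[t+1] (fun _ => 0)) i := by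
    intro t hne
    rw [Function.iterate_succ_apply']
    apply Finset.sum_lt_sum
    · intro i _
      exact daStep_ge _ i
    · by_contra hno
      push_neg at hno
      apply hne
      funext i
      have h1 := daStep_ge (P := P) (prio := prio) (q := q) (f^[t] (fun _ => 0)) i
      rw [← hf] at h1
      have h2 := hno i (Finset.mem_univ i)
      omega
  have hex : ∃ t ≤ B, f (f^[t] (fun _ => 0)) = f^[t] (fun _ => 0) := by
    by_contra hno
    push_neg at hno
    have hmono : ∀ t ≤ B + 1, t ≤ ∑ i : I, (f^[t] (fun _ => 0)) i := by
      intro t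
      induction t with
      | zero => intro _; omega
      | succ t ih =>
        intro ht
        have h1 := ih (by omega)
        have h2 := hstep t (hno t (by omega))
        omega
    have := hmono (B+1) le_rfl
    have := hW (B+1)
    omega
  obtain ⟨t, htB, htfix⟩ := hex
  have : f^[B+1] (fun _ => 0) = f^[t] (fun _ => 0) := by
    have h1 : f^[B+1] (fun _ => 0) = f^[B+1-t] (f^[t] (fun _ => 0)) := by
      rw [← Function.iterate_add_apply]
      congr 1
      omega
    rw [h1, Function.iterate_fixed htfix]
  rw [this, htfix]

end GSmu

section GSmu2
set_option linter.unusedSectionVars false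
variable {I S : Type*} [Fintype I] [DecidableEq I] [Fintype S] [DecidableEq S]
variable {P : I → List (Option S)} {prio : S → List I} {q : S → ℕ} {pr : List I}

lemma iterate_le_rnk (hnd : pr.Nodup) (hcm : ∀ j : I, j ∈ pr)
    (hA : ∀ i : I, (acceptables (P i)).Nodup) (hprio : ∀ s, prio s = pr) (t : ℕ) :
    ∀ i, (daStep P prio q)^[t] (fun _ => 0) i ≤ rnk P pr q i := by
  induction t with
  | zero => intro i; simp
  | succ t ih =>
    rw [Function.iterate_succ_apply']
    exact daStep_le_rnk hnd hcm hA hprio ih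

lemma sigma_eq_rnk (hnd : pr.Nodup) (hcm : ∀ j : I, j ∈ pr)
    (hA : ∀ i : I, (acceptables (P i)).Nodup) (hprio : ∀ s, prio s = pr) :
    (daStep P prio q)^[Fintype.card I * Fintype.card S + 1] (fun _ => 0) = rnk P pr q := by
  set σ := (daStep P prio q)^[Fintype.card I * Fintype.card S + 1] (fun _ => 0) with hσdef
  have hfix : daStep P prio q σ = σ := iterate_fixed_point hA
  have hle : ∀ i, σ i ≤ rnk P pr q i :=
    iterate_le_rnk hnd hcm hA hprio (Fintype.card I * Fintype.card S + 1)
  funext i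
  suffices H : ∀ n : ℕ, ∀ i : I, pr.idxOf i = n → σ i = rnk P pr q i from H _ i rfl
  intro n
  induction n using Nat.strong_induction_on with
  | _ n ih =>
  intro i hin
  by_contra hne
  have hlt : σ i < rnk P pr q i := lt_of_le_of_ne (hle i) hne
  have hlen : σ i < (acceptables (P i)).length :=
    lt_of_lt_of_le hlt (rnk_le_length hnd hcm i)
  set s := (acceptables (P i))[σ i]'hlen with hs
  have ht : daTarget P σ i = some s := by
    rw [daTarget, List.getElem?_eq_getElem hlen]
  have hfi : daStep P prio q σ i = σ i := congrFun hfix i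
  simp only [daStep, ht] at hfi
  have hheld : i ∈ daHeld P prio q σ s := by
    by_contra hh
    rw [if_neg hh] at hfi
    omega
  rw [daHeld, hprio s] at hheld
  have hpt : (fun j => decide (daTarget P σ j = some s)) i = true := decide_eq_true ht
  rw [mem_filter_take_iff pr hnd hcm _ i hpt (q s)] at hheld
  have hsmem : s ∈ acceptables (P i) := List.getElem_mem hlen
  have hidx : (acceptables (P i)).idxOf s = σ i := idxOf_getElem (hA i) _ hlen
  have hnav : ¬ abf P pr q i s < q s :=
    not_avail_of_lt_rnk (q := q) hnd hcm hsmem (by omega)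
  have hsub : (Finset.univ.filter fun j => pr.idxOf j < pr.idxOf i ∧ mu P pr q j = some s)
      ⊆ (Finset.univ.filter fun j => pr.idxOf j < pr.idxOf i ∧
          decide (daTarget P σ j = some s) = true) := by
    intro j hj
    simp only [Finset.mem_filter, Finset.mem_univ, true_and] at hj ⊢
    obtain ⟨hjlt, hjmu⟩ := hj
    refine ⟨hjlt, decide_eq_true ?_⟩
    have hσj : σ j = rnk P pr q j := ih (pr.idxOf j) (by omega) j rfl
    rw [daTarget, hσj, getElem?_rnk (q := q) hnd hcm j, hjmu]
  have hcard : abf P pr q i s ≤ (Finset.univ.filter fun j =>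
      pr.idxOf j < pr.idxOf i ∧
        decide (daTarget P σ j = some s) = true).card :=
    Finset.card_le_card hsub
  omega

lemma GS_eq_mu (hnd : pr.Nodup) (hcm : ∀ j : I, j ∈ pr)
    (hA : ∀ i : I, (acceptables (P i)).Nodup) (hprio : ∀ s, prio s = pr) :
    GS P prio q = mu P pr q := by
  have hσ := sigma_eq_rnk (q := q) hnd hcm hA hprio
  have hfix : daStep P prio q (rnk P pr q) = rnk P pr q := by
    rw [← hσ]
    exact iterate_fixed_point hA
  funext i
  simp only [GS, hσ]
  cases hmu : mu P pr q i with
  | none =>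
    have ht : daTarget P (rnk P pr q) i = none := by
      rw [daTarget, getElem?_rnk (q := q) hnd hcm i, hmu]
    simp only [ht]
  | some s =>
    have ht : daTarget P (rnk P pr q) i = some s := by
      rw [daTarget, getElem?_rnk (q := q) hnd hcm i, hmu]
    simp only [ht]
    have hfi : daStep P prio q (rnk P pr q) i = rnk P pr q i := congrFun hfix i
    simp only [daStep, ht] at hfi
    have hheld : i ∈ daHeld P prio q (rnk P pr q) s := by
      by_contra hh
      rw [if_neg hh] at hfi
      omega
    rw [if_pos hheld]

end GSmu2

/-! ### Strategy lists -/

section Strategies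
set_option linter.unusedSectionVars false
variable {I S : Type*} [Fintype I] [DecidableEq I] [Fintype S] [DecidableEq S]

/-- The report listing only `s` as acceptable. -/
noncomputable def QTop (s : S) : List (Option S) :=
  some s :: none :: ((((Finset.univ : Finset (Option S)).toList).erase (some s)).erase none)

/-- The report listing no school as acceptable. -/
noncomputable def QBot (S : Type*) [Fintype S] [DecidableEq S] : List (Option S) :=
  none :: (((Finset.univ : Finset (Option S)).toList).erase none)

lemma validPref_QTop (s : S) : ValidPref (QTop s) := by
  have hnd0 : ((Finset.univ : Finset (Option S)).toList).Nodup := Finset.nodup_toList _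
  have hnd1 : (((Finset.univ : Finset (Option S)).toList).erase (some s)).Nodup :=
    hnd0.erase _
  constructor
  · refine List.nodup_cons.2 ⟨?_, List.nodup_cons.2 ⟨?_, hnd1.erase _⟩⟩
    · simp only [List.mem_cons]
      rintro (h | h)
      · exact absurd h (by simp)
      · rw [hnd1.mem_erase_iff] at h
        rw [hnd0.mem_erase_iff] at h
        simp at h
    · intro h
      rw [hnd1.mem_erase_iff] at h
      simp at h
  · intro x
    by_cases h1 : x = some s
    · simp [h1, QTop]
    · by_cases h2 : x = none
      · simp [h2, QTop]
      · simp only [QTop, List.mem_cons]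
        refine Or.inr (Or.inr ?_)
        rw [hnd1.mem_erase_iff, hnd0.mem_erase_iff]
        exact ⟨h2, h1, by simp⟩

lemma validPref_QBot : ValidPref (QBot S) := by
  have hnd0 : ((Finset.univ : Finset (Option S)).toList).Nodup := Finset.nodup_toList _
  constructor
  · refine List.nodup_cons.2 ⟨?_, hnd0.erase _⟩
    intro h
    rw [hnd0.mem_erase_iff] at h
    simp at h
  · intro x
    by_cases h2 : x = none
    · simp [h2, QBot]
    · simp only [QBot, List.mem_cons]
      refine Or.inr ?_
      rw [hnd0.mem_erase_iff]
      exact ⟨h2, by simp⟩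

lemma acceptables_QTop (s : S) : acceptables (QTop s) = [s] := by
  rw [acceptables, QTop, List.takeWhile_cons_of_pos (by simp),
    List.takeWhile_cons_of_neg (by simp)]
  simp [List.filterMap_cons]

lemma acceptables_QBot : acceptables (QBot S) = [] := by
  rw [acceptables, QBot, List.takeWhile_cons_of_neg (by simp)]
  simp

lemma acceptables_truncate_QTop {k : ℕ} (hk : 1 ≤ k) (s : S) :
    acceptables (truncate (QTop s) k) = [s] := by
  rw [acceptables_truncate, acceptables_QTop]
  exact List.take_of_length_le (by simpa using hk)

lemma acceptables_truncate_QBot (k : ℕ) :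
    acceptables (truncate (QBot S) k) = [] := by
  rw [acceptables_truncate, acceptables_QBot, List.take_nil]

lemma acceptables_truncate_nodup {p : List (Option S)} (h : p.Nodup) (k : ℕ) :
    (acceptables (truncate p k)).Nodup := by
  rw [acceptables_truncate]
  exact (List.take_sublist _ _).nodup (acceptables_nodup h)

lemma mu_ext {P₁ P₂ : I → List (Option S)} {pr : List I} {q : S → ℕ}
    (H : ∀ i : I, (∀ j : I, pr.idxOf j < pr.idxOf i →
        mu P₁ pr q j = mu P₂ pr q j) → mu P₁ pr q i = mu P₂ pr q i) :
    ∀ i, mu P₁ pr q i = mu P₂ pr q i := by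
  suffices H2 : ∀ (n : ℕ) (i : I), pr.idxOf i = n → mu P₁ pr q i = mu P₂ pr q i from
    fun i => H2 _ i rfl
  intro n
  induction n using Nat.strong_induction_on with
  | _ n ih =>
  intro i hin
  apply H
  intro j hj
  exact ih (pr.idxOf j) (by omega) j rfl

end Strategies
/-- Lemma on SD with sincere and sophisticated students: for `k > 1`
and a common priority, the game `(SD^k, P)` with sincere students (the complement of `M`,
reporting truthfully) and sophisticated students `M` has a unique Nash equilibrium
outcome, namely `SD(P^k_N, P_M, ≻, q)`, and a Nash equilibrium exists. -/
theorem sdk_unique_nash_equilibrium_outcome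
    {I S : Type*} [Fintype I] [DecidableEq I] [Fintype S] [DecidableEq S]
    (hIS : Fintype.card S < Fintype.card I)
    (k : ℕ) (hk : 1 < k) (M : Finset I)
    (P : I → List (Option S)) (prio : S → List I) (q : S → ℕ)
    (hP : ∀ i, ValidPref (P i)) (hprio : ∀ s, ValidPrio (prio s))
    (hcp : ∀ s s' : S, prio s = prio s') :
    (∀ P' : I → List (Option S),
        NashEq (fun R => GSk k R prio q) P M P' →
        GSk k P' prio q = GS (fun i => if i ∈ M then P i else truncate (P i) k) prio q) ∧
    (∃ P' : I → List (Option S), NashEq (fun R => GSk k R prio q) P M P') := by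
  classical
  by_cases hS : Nonempty S
  case neg =>
    -- No schools: every mechanism outputs `none` everywhere.
    have hacc : ∀ p : List (Option S), acceptables p = [] := by
      intro p
      cases h : acceptables p with
      | nil => rfl
      | cons a t => exact absurd (Nonempty.intro a) hS
    have hGS : ∀ R : I → List (Option S), GS R prio q = fun _ => none := by
      intro R
      funext i
      have ht : daTarget R
          ((daStep R prio q)^[Fintype.card I * Fintype.card S + 1] (fun _ => 0)) i
          = none := by
        rw [daTarget, hacc]
        simp
      simp only [GS, ht]
    constructor
    · intro P' _
      show GS (fun i => truncate (P' i) k) prio q = _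
      rw [hGS, hGS]
    · refine ⟨P, hP, fun i _ => rfl, ?_⟩
      intro i _ Q _
      show ¬ prefLt (P i) (GS (fun j => truncate (Function.update P i Q j) k) prio q i)
        (GS (fun j => truncate (P j) k) prio q i)
      rw [hGS, hGS]
      simp [prefLt]
  case pos =>
    obtain ⟨s₀⟩ := hS
    obtain ⟨hnd, hcm⟩ := hprio s₀
    have hprio_eq : ∀ s, prio s = prio s₀ := fun s => hcp s s₀
    set pr := prio s₀ with hprdef
    set R' : I → List (Option S) := fun i => if i ∈ M then P i else truncate (P i) k
      with hR'def
    have hAR' : ∀ i, (acceptables (R' i)).Nodup := by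
      intro i
      rw [hR'def]
      by_cases h : i ∈ M
      · simp only [if_pos h]
        exact acceptables_nodup (hP i).1
      · simp only [if_neg h]
        exact acceptables_truncate_nodup (hP i).1 k
    constructor
    · -- uniqueness of the equilibrium outcome
      intro P' hNE
      obtain ⟨hval, hsin, hnash⟩ := hNE
      show GS (fun j => truncate (P' j) k) prio q = GS R' prio q
      set Rt : I → List (Option S) := fun j => truncate (P' j) k with hRtdef
      have hARt : ∀ i, (acceptables (Rt i)).Nodup :=
        fun i => acceptables_truncate_nodup (hval i).1 k
      rw [GS_eq_mu hnd hcm hARt hprio_eq, GS_eq_mu hnd hcm hAR' hprio_eq]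
      funext i
      refine mu_ext ?_ i
      clear i
      intro i hIH
      have habf : abf Rt pr q i = abf R' pr q i := abf_congr hnd hIH
      rw [mu_formula hnd hcm, mu_formula hnd hcm, habf]
      by_cases hiM : i ∈ M
      swap
      · -- sincere student: identical reports
        have hlist : Rt i = R' i := by
          rw [hRtdef, hR'def]
          show truncate (P' i) k = _
          rw [hsin i hiM]
          simp [if_neg hiM]
        rw [hlist]
      · -- sophisticated student: use the Nash property
        have hRi : R' i = P i := by
          rw [hR'def]
          simp [if_pos hiM]
        rw [hRi]
        have ho : GSk k P' prio q i
            = (acceptables (Rt i)).find? (fun s => decide (abf R' pr q i s < q s)) := by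
          show GS Rt prio q i = _
          rw [GS_eq_mu hnd hcm hARt hprio_eq, mu_formula hnd hcm, habf]
        have hdev : ∀ Q : List (Option S), ValidPref Q →
            GSk k (Function.update P' i Q) prio q i
              = (acceptables (truncate Q k)).find?
                  (fun s => decide (abf R' pr q i s < q s)) := by
          intro Q hQ
          have hupd : (fun j => truncate (Function.update P' i Q j) k)
              = Function.update Rt i (truncate Q k) := by
            funext j
            by_cases hj : j = i
            · subst hj
              rw [Function.update_self, Function.update_self]
            · rw [Function.update_of_ne hj, Function.update_of_ne hj]
          have hAupd : ∀ j, (acceptables (Function.update Rt i (truncate Q k) j)).Nodup := by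
            intro j
            by_cases hj : j = i
            · subst hj
              rw [Function.update_self]
              exact acceptables_truncate_nodup hQ.1 k
            · rw [Function.update_of_ne hj]
              exact hARt j
          show GS (fun j => truncate (Function.update P' i Q j) k) prio q i = _
          rw [hupd, GS_eq_mu hnd hcm hAupd hprio_eq, mu_formula hnd hcm,
            abf_update hnd hcm, habf, Function.update_self]
        have hN : ∀ Q : List (Option S), ValidPref Q →
            ¬ prefLt (P i)
              ((acceptables (truncate Q k)).find? (fun s => decide (abf R' pr q i s < q s)))
              ((acceptables (Rt i)).find? (fun s => decide (abf R' pr q i s < q s))) := by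
          intro Q hQ
          have h := hnash i hiM Q hQ
          simpa only [ho, hdev Q hQ] using h
        cases hd : (acceptables (P i)).find? (fun s => decide (abf R' pr q i s < q s)) with
        | some s' =>
          have hps := List.find?_some hd
          have hsmem : s' ∈ acceptables (P i) := List.mem_of_find?_eq_some hd
          have hQT := hN (QTop s') (validPref_QTop s')
          rw [acceptables_truncate_QTop (by omega) s'] at hQT
          have hfind : [s'].find? (fun s => decide (abf R' pr q i s < q s)) = some s' :=
            List.find?_cons_of_pos (l := _) hps
          rw [hfind] at hQT
          cases hoE : (acceptables (Rt i)).find?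
              (fun s => decide (abf R' pr q i s < q s)) with
          | none =>
            exfalso
            rw [hoE] at hQT
            exact hQT (indexOf_acceptable_lt_none (hP i).2 hsmem)
          | some s =>
            rw [hoE] at hQT
            have hcs := List.find?_some hoE
            have hle : (P i).idxOf (some s) ≤ (P i).idxOf (some s') := not_lt.1 hQT
            have hsacc : s ∈ acceptables (P i) :=
              mem_acceptables_of_indexOf_lt (hP i).2
                (lt_of_le_of_lt hle (indexOf_acceptable_lt_none (hP i).2 hsmem))
            have hmin : (acceptables (P i)).idxOf s' ≤ (acceptables (P i)).idxOf s :=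
              find?_min hd hsacc hcs
            have hle2 : (P i).idxOf (some s') ≤ (P i).idxOf (some s) := by
              rw [indexOf_acceptable hsmem, indexOf_acceptable hsacc]
              exact hmin
            exact indexOf_inj ((hP i).2 _) ((hP i).2 _) (le_antisymm hle hle2)
        | none =>
          cases hoE : (acceptables (Rt i)).find?
              (fun s => decide (abf R' pr q i s < q s)) with
          | none => rfl
          | some s =>
            exfalso
            have hcs := List.find?_some hoE
            have hsnacc : s ∉ acceptables (P i) := fun hmem =>
              (List.find?_eq_none.1 hd s hmem) hcs
            have hQB := hN (QBot S) validPref_QBot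
            rw [acceptables_truncate_QBot, List.find?_nil, hoE] at hQB
            exact hQB (indexOf_none_lt_unacceptable (hP i).2 hsnacc)
    · -- existence of a Nash equilibrium
      set P'' : I → List (Option S) :=
        fun j => if j ∈ M then (mu R' pr q j).elim (QBot S) QTop else P j with hP''def
      have hvalid : ∀ j, ValidPref (P'' j) := by
        intro j
        rw [hP''def]
        by_cases hj : j ∈ M
        · simp only [if_pos hj]
          cases mu R' pr q j with
          | none => exact validPref_QBot
          | some s => exact validPref_QTop s
        · simp only [if_neg hj]
          exact hP j
      set Rt'' : I → List (Option S) := fun j => truncate (P'' j) k with hRt''def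
      have hARt'' : ∀ j, (acceptables (Rt'' j)).Nodup :=
        fun j => acceptables_truncate_nodup (hvalid j).1 k
      have hmu'' : ∀ j, mu Rt'' pr q j = mu R' pr q j := by
        refine mu_ext ?_
        intro j hIH
        have habf : abf Rt'' pr q j = abf R' pr q j := abf_congr hnd hIH
        rw [mu_formula hnd hcm, mu_formula hnd hcm, habf]
        by_cases hjM : j ∈ M
        · cases hmj : mu R' pr q j with
          | some s =>
            have hlist : Rt'' j = truncate (QTop s) k := by
              rw [hRt''def]
              show truncate (P'' j) k = _
              rw [hP''def]
              show truncate (if j ∈ M then (mu R' pr q j).elim (QBot S) QTop else P j) k = _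
              rw [if_pos hjM, hmj]
              rfl
            rw [hlist, acceptables_truncate_QTop (by omega) s]
            have hr : (acceptables (R' j)).find?
                (fun s => decide (abf R' pr q j s < q s)) = some s := by
              rw [← mu_formula hnd hcm]
              exact hmj
            rw [hr]
            have hcs := List.find?_some hr
            exact List.find?_cons_of_pos (l := _) hcs
          | none =>
            have hlist : Rt'' j = truncate (QBot S) k := by
              rw [hRt''def]
              show truncate (P'' j) k = _
              rw [hP''def]
              show truncate (if j ∈ M then (mu R' pr q j).elim (QBot S) QTop else P j) k = _
              rw [if_pos hjM, hmj]
              rfl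
            rw [hlist, acceptables_truncate_QBot, List.find?_nil]
            have hr : (acceptables (R' j)).find?
                (fun s => decide (abf R' pr q j s < q s)) = none := by
              rw [← mu_formula hnd hcm]
              exact hmj
            exact hr.symm
        · have hlist : Rt'' j = R' j := by
            rw [hRt''def]
            show truncate (P'' j) k = _
            rw [hP''def]
            show truncate (if j ∈ M then (mu R' pr q j).elim (QBot S) QTop else P j) k = _
            rw [if_neg hjM, hR'def]
            show _ = if j ∈ M then P j else truncate (P j) k
            rw [if_neg hjM]
          rw [hlist]
      refine ⟨P'', hvalid, ?_, ?_⟩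
      · intro j hj
        rw [hP''def]
        simp [if_neg hj]
      · intro i hiM Q hQ
        have hRi : R' i = P i := by
          rw [hR'def]
          simp [if_pos hiM]
        have hout : GSk k P'' prio q i = mu R' pr q i := by
          show GS Rt'' prio q i = _
          rw [GS_eq_mu hnd hcm hARt'' hprio_eq]
          exact hmu'' i
        have hdev : GSk k (Function.update P'' i Q) prio q i
            = (acceptables (truncate Q k)).find?
                (fun s => decide (abf R' pr q i s < q s)) := by
          have hupd : (fun j => truncate (Function.update P'' i Q j) k)
              = Function.update Rt'' i (truncate Q k) := by
            funext j
            by_cases hj : j = i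
            · subst hj
              rw [Function.update_self, Function.update_self]
            · rw [Function.update_of_ne hj, Function.update_of_ne hj]
          have hAupd : ∀ j, (acceptables (Function.update Rt'' i (truncate Q k) j)).Nodup := by
            intro j
            by_cases hj : j = i
            · subst hj
              rw [Function.update_self]
              exact acceptables_truncate_nodup hQ.1 k
            · rw [Function.update_of_ne hj]
              exact hARt'' j
          show GS (fun j => truncate (Function.update P'' i Q j) k) prio q i = _
          rw [hupd, GS_eq_mu hnd hcm hAupd hprio_eq, mu_formula hnd hcm,
            abf_update hnd hcm, Function.update_self,
            abf_congr hnd (fun j _ => hmu'' j)]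
        have hdf : mu R' pr q i = (acceptables (P i)).find?
            (fun s => decide (abf R' pr q i s < q s)) := by
          rw [mu_formula hnd hcm, hRi]
        intro hpl
        simp only [hdev, hout, hdf] at hpl
        cases he : (acceptables (truncate Q k)).find?
            (fun s => decide (abf R' pr q i s < q s)) with
        | none =>
          rw [he] at hpl
          cases hd : (acceptables (P i)).find?
              (fun s => decide (abf R' pr q i s < q s)) with
          | none =>
            rw [hd] at hpl
            simp only [prefLt] at hpl
            omega
          | some s' =>
            rw [hd] at hpl
            simp only [prefLt] at hpl
            have hsmem : s' ∈ acceptables (P i) := List.mem_of_find?_eq_some hd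
            have := indexOf_acceptable_lt_none (hP i).2 hsmem
            omega
        | some s =>
          rw [he] at hpl
          have hcs := List.find?_some he
          simp only [prefLt] at hpl
          by_cases hsacc : s ∈ acceptables (P i)
          · cases hd : (acceptables (P i)).find?
                (fun s => decide (abf R' pr q i s < q s)) with
            | none => exact (List.find?_eq_none.1 hd s hsacc) hcs
            | some s' =>
              rw [hd] at hpl
              have hmin : (acceptables (P i)).idxOf s' ≤ (acceptables (P i)).idxOf s :=
                find?_min hd hsacc hcs
              have hsmem : s' ∈ acceptables (P i) := List.mem_of_find?_eq_some hd
              have : (P i).idxOf (some s') ≤ (P i).idxOf (some s) := by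
                rw [indexOf_acceptable hsmem, indexOf_acceptable hsacc]
                exact hmin
              omega
          · have h1 := indexOf_none_lt_unacceptable (hP i).2 hsacc
            cases hd : (acceptables (P i)).find?
                (fun s => decide (abf R' pr q i s < q s)) with
            | none =>
              rw [hd] at hpl
              omega
            | some s' =>
              rw [hd] at hpl
              have hsmem : s' ∈ acceptables (P i) := List.mem_of_find?_eq_some hd
              have h2 := indexOf_acceptable_lt_none (hP i).2 hsmem
              omega

end SchoolChoice
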